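/- For every integer N ≥ 0 and real ε, the constraint polynomial satisfies P_N^{(N,ε)}(x,y) = det( y·I_N + x·D_N + C_N^{(N,ε)} ), where D_N = diag(1,2,…,N) and C_N^{(N,ε)} is the N×N tridiagonal matrix with diagonal entries (C)_{i,i} = −i(2(N−i) + 1 + 2ε) for i = 1,…,N, superdiagonal entries (C)_{i,i+1} = 1, and subdiagonal entries (C)_{i+1,i} = i(i+1)(N−i)(N−i+2ε), for i = 1,…,N−1. -/

import Mathlib

/-- The constraint polynomials `P_k^{(N,ε)}(x,y)` of the asymmetric quantum Rabi model,
as real-valued functions, defined by the three-term recurrence. -/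
def constraintPoly (N : ℕ) (ε x y : ℝ) : ℕ → ℝ
  | 0 => 1
  | 1 => x + y - 1 - 2 * ε
  | k + 2 =>
      (((k : ℝ) + 2) * x + y - ((k : ℝ) + 2) * (((k : ℝ) + 2) + 2 * ε)) *
          constraintPoly N ε x y (k + 1) -
        ((k : ℝ) + 2) * ((k : ℝ) + 1) * ((N : ℝ) - ((k : ℝ) + 1)) * x *
          constraintPoly N ε x y k

/-- The tridiagonal matrix `C_N^{(N,ε)}` (with `1`-based indices `i = (i₀ : Fin N) + 1`):
diagonal entries `-i(2(N-i)+1+2ε)`, superdiagonal entries `1`, and subdiagonal entries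
`(C)_{i+1,i} = i(i+1)(N-i)(N-i+2ε)`. -/
def Cmat (N : ℕ) (ε : ℝ) : Matrix (Fin N) (Fin N) ℝ :=
  Matrix.of fun i j =>
    if (i : ℕ) = (j : ℕ) then
      -(((i : ℕ) + 1 : ℝ) * (2 * ((N : ℝ) - ((i : ℕ) + 1)) + 1 + 2 * ε))
    else if (j : ℕ) = (i : ℕ) + 1 then 1
    else if (i : ℕ) = (j : ℕ) + 1 then
      ((j : ℕ) + 1 : ℝ) * ((j : ℕ) + 2 : ℝ) * ((N : ℝ) - ((j : ℕ) + 1)) *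
        ((N : ℝ) - ((j : ℕ) + 1) + 2 * ε)
    else 0



open Finset

/-- A generic `n × n` tridiagonal matrix with diagonal `f`, superdiagonal `1`,
subdiagonal `g` (at entry `(j+1, j)` the value is `g j`). -/
def triMat (f g : ℕ → ℝ) (n : ℕ) : Matrix (Fin n) (Fin n) ℝ :=
  Matrix.of fun i j =>
    if (i : ℕ) = (j : ℕ) then f (i : ℕ)
    else if (j : ℕ) = (i : ℕ) + 1 then 1
    else if (i : ℕ) = (j : ℕ) + 1 then g (j : ℕ)
    else 0

/-- Continuant from the top-left corner. -/
def dtri : ℕ → (ℕ → ℝ) → (ℕ → ℝ) → ℝ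
  | 0, _, _ => 1
  | 1, f, _ => f 0
  | n + 2, f, g =>
      f 0 * dtri (n + 1) (fun i => f (i + 1)) (fun i => g (i + 1)) -
        g 0 * dtri n (fun i => f (i + 2)) (fun i => g (i + 2))

lemma dtri_back (n : ℕ) : ∀ f g : ℕ → ℝ,
    dtri (n + 2) f g = f (n + 1) * dtri (n + 1) f g - g n * dtri n f g := by
  induction n using Nat.twoStepInduction with
  | zero => intro f g; simp [dtri]; ring
  | one => intro f g; simp [dtri]; ring
  | more n ih1 ih2 =>
      intro f g
      have h1 := ih2 (fun i => f (i + 1)) (fun i => g (i + 1))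
      have h2 := ih1 (fun i => f (i + 2)) (fun i => g (i + 2))
      simp only [dtri] at *
      rw [h1, h2]; ring

lemma triMat_sub1 (f g : ℕ → ℝ) (n : ℕ) :
    (triMat f g (n + 1)).submatrix Fin.succ Fin.succ
      = triMat (fun i => f (i + 1)) (fun i => g (i + 1)) n := by
  ext i j
  simp only [triMat, Matrix.submatrix_apply, Matrix.of_apply, Fin.val_succ, add_left_inj]

lemma det_triMat (n : ℕ) : ∀ f g : ℕ → ℝ, (triMat f g n).det = dtri n f g := by
  induction n using Nat.twoStepInduction with
  | zero => intro f g; simp [dtri]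
  | one => intro f g; simp [Matrix.det_fin_one, dtri, triMat]
  | more n ih1 ih2 =>
      intro f g
      rw [Matrix.det_succ_row_zero, Fin.sum_univ_succ, Fin.sum_univ_succ]
      have hz : ∀ j : Fin n,
          ((-1 : ℝ) ^ ((j.succ.succ : Fin (n+2)) : ℕ) * triMat f g (n+2) 0 j.succ.succ *
            ((triMat f g (n+2)).submatrix Fin.succ (j.succ.succ).succAbove).det) = 0 := by
        intro j
        have : triMat f g (n+2) 0 j.succ.succ = 0 := by
          simp only [triMat, Matrix.of_apply, Fin.val_zero, Fin.val_succ]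
          have h1 : ¬ (0 = (j:ℕ) + 1 + 1) := by omega
          have h2 : ¬ ((j:ℕ) + 1 + 1 = 0 + 1) := by omega
          have h3 : ¬ (0 = (j:ℕ) + 1 + 1 + 1) := by omega
          simp [h1, h2, h3]
        rw [this]; ring
      rw [Finset.sum_eq_zero (fun j _ => hz j), add_zero]
      -- entry (0,0) and (0,1)
      have e00 : triMat f g (n+2) 0 0 = f 0 := by simp [triMat]
      have e01 : triMat f g (n+2) 0 (Fin.succ 0) = 1 := by
        simp only [triMat, Matrix.of_apply, Fin.val_zero, Fin.val_succ]
        norm_num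
      rw [e00, e01, Fin.succAbove_zero, triMat_sub1, ih2]
      -- second minor: B = submatrix Fin.succ (succ 0).succAbove
      have hB : ((triMat f g (n+2)).submatrix Fin.succ ((0 : Fin (n+1)).succ).succAbove).det
          = g 0 * dtri n (fun i => f (i + 2)) (fun i => g (i + 2)) := by
        set B := (triMat f g (n+2)).submatrix Fin.succ ((0 : Fin (n+1)).succ).succAbove with hBdef
        rw [Matrix.det_succ_column_zero, Fin.sum_univ_succ]
        have hz2 : ∀ i : Fin n,
            ((-1 : ℝ) ^ ((i.succ : Fin (n+1)) : ℕ) * B i.succ 0 *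
              (B.submatrix (i.succ).succAbove Fin.succ).det) = 0 := by
          intro i
          have : B i.succ 0 = 0 := by
            have h0 : ((0:Fin (n+1)).succ).succAbove (0 : Fin (n+1)) = 0 := by
              simpa using Fin.succ_succAbove_zero (0 : Fin (n+1))
            rw [hBdef]
            simp only [Matrix.submatrix_apply, h0]
            simp only [triMat, Matrix.of_apply, Fin.val_succ, Fin.val_zero]
            have h1 : ¬ ((i:ℕ) + 1 + 1 = 0) := by omega
            have h2 : ¬ ((0:ℕ) = (i:ℕ) + 1 + 1 + 1) := by omega
            have h3 : ¬ ((i:ℕ) + 1 + 1 = 0 + 1) := by omega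
            simp [h1, h2, h3]
          rw [this]; ring
        rw [Finset.sum_eq_zero (fun i _ => hz2 i), add_zero]
        have hB00 : B 0 0 = g 0 := by
          have h0 : ((0:Fin (n+1)).succ).succAbove (0 : Fin (n+1)) = 0 := by
            simpa using Fin.succ_succAbove_zero (0 : Fin (n+1))
          rw [hBdef]
          simp only [Matrix.submatrix_apply, h0]
          simp only [triMat, Matrix.of_apply, Fin.val_succ, Fin.val_zero]
          norm_num
        have hBsub2 : B.submatrix (0 : Fin (n+1)).succAbove Fin.succ
            = triMat (fun i => f (i + 2)) (fun i => g (i + 2)) n := by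
          ext i j
          have hsa : ((0:Fin (n+1)).succ).succAbove j.succ = j.succ.succ := by
            simpa using Fin.succ_succAbove_succ (0 : Fin (n+1)) j
          rw [hBdef]
          simp only [Matrix.submatrix_apply, Fin.succAbove_zero, hsa]
          simp only [triMat, Matrix.of_apply, Fin.val_succ, add_left_inj]
        rw [hB00, hBsub2, ih1]
        simp
      rw [hB]
      simp only [Fin.val_zero, Fin.val_succ, pow_zero, pow_one, dtri]
      ring

/-- Entries of the intertwining matrix. -/
noncomputable def uent (N : ℕ) (a b : ℕ) : ℝ :=
  if b ≤ a then
    (-1) ^ (a - b) *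
        (∏ i ∈ Finset.Ico b a, (((i : ℝ) + 1) * ((i : ℝ) + 2) * ((N : ℝ) - ((i : ℝ) + 1)))) /
      (a - b).factorial
  else 0

lemma uent_self (N a : ℕ) : uent N a a = 1 := by
  simp [uent]

lemma uent_of_lt (N : ℕ) {a b : ℕ} (h : a < b) : uent N a b = 0 := by
  simp [uent, not_le.2 h]

lemma uent_top (N : ℕ) {c : ℕ} (hc : c < N) : uent N N c = 0 := by
  rw [uent, if_pos hc.le]
  have hmem : N - 1 ∈ Finset.Ico c N := Finset.mem_Ico.2 ⟨by omega, by omega⟩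
  rw [Finset.prod_eq_zero hmem]
  · simp
  · have h1 : (((N - 1 : ℕ) : ℝ)) = (N : ℝ) - 1 := by
      have : (1:ℕ) ≤ N := by omega
      push_cast [this]; ring
    rw [h1]; ring

lemma uent_R1 (N a c : ℕ) :
    ((a : ℝ) + 1) * ((a : ℝ) + 2) * ((N : ℝ) - ((a : ℝ) + 1)) * uent N a c
      = ((c : ℝ) - ((a : ℝ) + 1)) * uent N (a + 1) c := by
  rcases le_or_gt c a with hca | hca
  · obtain ⟨k, rfl⟩ : ∃ k, a = c + k := ⟨a - c, by omega⟩
    rw [uent, if_pos (by omega), uent, if_pos (by omega)]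
    have h1 : c + k - c = k := by omega
    have h2 : c + k + 1 - c = k + 1 := by omega
    rw [h1, h2]
    rw [Finset.prod_Ico_succ_top (by omega : c ≤ c + k)]
    rw [Nat.factorial_succ, pow_succ]
    have hk : ((k.factorial : ℝ)) ≠ 0 := Nat.cast_ne_zero.mpr k.factorial_ne_zero
    push_cast
    field_simp
    ring
  · rcases Nat.eq_or_lt_of_le hca with hca' | hca'
    · rw [← hca']
      rw [uent_of_lt N (by omega), uent_self]
      push_cast; ring
    · rw [uent_of_lt N (by omega), uent_of_lt N (by omega)]
      ring

lemma uent_R2 (N a c : ℕ) :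
    ((c : ℝ) + 1) * ((c : ℝ) + 2) * ((N : ℝ) - ((c : ℝ) + 1)) * uent N a (c + 1)
      = ((c : ℝ) - (a : ℝ)) * uent N a c := by
  rcases lt_or_ge c a with hca | hca
  · obtain ⟨k, rfl⟩ : ∃ k, a = c + k + 1 := ⟨a - c - 1, by omega⟩
    rw [uent, if_pos (by omega), uent, if_pos (by omega)]
    have h1 : c + k + 1 - (c + 1) = k := by omega
    have h2 : c + k + 1 - c = k + 1 := by omega
    rw [h1, h2]
    rw [Finset.prod_eq_prod_Ico_succ_bot (by omega : c < c + k + 1)]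
    rw [Nat.factorial_succ, pow_succ]
    have hk : ((k.factorial : ℝ)) ≠ 0 := Nat.cast_ne_zero.mpr k.factorial_ne_zero
    push_cast
    field_simp
    ring
  · rcases Nat.eq_or_lt_of_le hca with hca' | hca'
    · rw [hca']
      rw [uent_of_lt N (by omega), uent_self]
      push_cast; ring
    · rw [uent_of_lt N hca', uent_of_lt N (by omega)]
      ring

lemma fin_sum_ite {n : ℕ} (k : ℕ) (w : Fin n → ℝ) :
    (∑ b : Fin n, if (b : ℕ) = k then w b else 0) = if h : k < n then w ⟨k, h⟩ else 0 := by
  split_ifs with h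
  · rw [Finset.sum_eq_single (⟨k, h⟩ : Fin n)]
    · simp
    · intro b _ hb
      rw [if_neg]
      intro hb'
      exact hb (Fin.ext hb')
    · intro h'; exact absurd (Finset.mem_univ _) h'
  · refine Finset.sum_eq_zero fun b _ => if_neg ?_
    have := b.isLt; omega

lemma mul_triMat_apply (n : ℕ) (U : Matrix (Fin n) (Fin n) ℝ) (f g : ℕ → ℝ) (a c : Fin n) :
    (U * triMat f g n) a c =
      (if h : 1 ≤ (c : ℕ) then U a ⟨(c : ℕ) - 1, by omega⟩ else 0) + U a c * f (c : ℕ) +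
        (if h : (c : ℕ) + 1 < n then U a ⟨(c : ℕ) + 1, h⟩ * g (c : ℕ) else 0) := by
  rw [Matrix.mul_apply]
  have key : ∀ b : Fin n, U a b * triMat f g n b c =
      (if (b : ℕ) = (c : ℕ) - 1 ∧ 1 ≤ (c : ℕ) then U a b else 0) +
        (if (b : ℕ) = (c : ℕ) then U a b * f (c : ℕ) else 0) +
        (if (b : ℕ) = (c : ℕ) + 1 then U a b * g (c : ℕ) else 0) := by
    intro b
    simp only [triMat, Matrix.of_apply]
    by_cases h1 : (b : ℕ) = (c : ℕ)
    · rw [if_pos h1, h1, if_neg (by omega), if_pos rfl, if_neg (by omega)]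
      ring
    · by_cases h2 : (c : ℕ) = (b : ℕ) + 1
      · rw [if_neg h1, if_pos h2, if_pos (by omega : (b:ℕ) = (c:ℕ) - 1 ∧ 1 ≤ (c:ℕ)),
          if_neg h1, if_neg (by omega)]
        ring
      · by_cases h3 : (b : ℕ) = (c : ℕ) + 1
        · rw [if_neg h1, if_neg h2, if_pos h3, if_neg (by omega), if_neg h1, if_pos h3]
          ring
        · rw [if_neg h1, if_neg h2, if_neg h3, if_neg (by omega), if_neg h1, if_neg h3]
          ring
  rw [Finset.sum_congr rfl fun b _ => key b]
  rw [Finset.sum_add_distrib, Finset.sum_add_distrib]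
  congr 1
  · congr 1
    · by_cases hc : 1 ≤ (c : ℕ)
      · have : ∀ b : Fin n, (if (b : ℕ) = (c : ℕ) - 1 ∧ 1 ≤ (c : ℕ) then U a b else 0)
            = (if (b : ℕ) = (c : ℕ) - 1 then U a b else 0) := by
          intro b; simp [hc]
        rw [Finset.sum_congr rfl fun b _ => this b, fin_sum_ite, dif_pos hc,
          dif_pos (by omega : (c : ℕ) - 1 < n)]
      · rw [dif_neg hc]
        refine Finset.sum_eq_zero fun b _ => if_neg ?_
        tauto
    · rw [fin_sum_ite, dif_pos c.isLt]
  · rw [fin_sum_ite]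

lemma triMat_mul_apply (n : ℕ) (U : Matrix (Fin n) (Fin n) ℝ) (f g : ℕ → ℝ) (a c : Fin n) :
    (triMat f g n * U) a c =
      (if h : 1 ≤ (a : ℕ) then g ((a : ℕ) - 1) * U ⟨(a : ℕ) - 1, by omega⟩ c else 0) +
        f (a : ℕ) * U a c +
        (if h : (a : ℕ) + 1 < n then U ⟨(a : ℕ) + 1, h⟩ c else 0) := by
  rw [Matrix.mul_apply]
  have key : ∀ b : Fin n, triMat f g n a b * U b c =
      (if (b : ℕ) = (a : ℕ) - 1 ∧ 1 ≤ (a : ℕ) then g ((a : ℕ) - 1) * U b c else 0) +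
        (if (b : ℕ) = (a : ℕ) then f (a : ℕ) * U b c else 0) +
        (if (b : ℕ) = (a : ℕ) + 1 then U b c else 0) := by
    intro b
    simp only [triMat, Matrix.of_apply]
    by_cases h1 : (a : ℕ) = (b : ℕ)
    · rw [if_pos h1, if_neg (by omega), if_pos h1.symm, if_neg (by omega)]
      ring
    · by_cases h2 : (b : ℕ) = (a : ℕ) + 1
      · rw [if_neg h1, if_pos h2, if_neg (by omega), if_neg (by omega), if_pos h2]
        ring
      · by_cases h3 : (a : ℕ) = (b : ℕ) + 1
        · rw [if_neg h1, if_neg h2, if_pos h3,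
            if_pos (by omega : (b:ℕ) = (a:ℕ) - 1 ∧ 1 ≤ (a:ℕ)), if_neg (by omega), if_neg h2]
          have hb : (a : ℕ) - 1 = (b : ℕ) := by omega
          rw [hb]
          ring
        · rw [if_neg h1, if_neg h2, if_neg h3, if_neg (by omega), if_neg (by omega), if_neg h2]
          ring
  rw [Finset.sum_congr rfl fun b _ => key b]
  rw [Finset.sum_add_distrib, Finset.sum_add_distrib]
  congr 1
  · congr 1
    · by_cases ha : 1 ≤ (a : ℕ)
      · have : ∀ b : Fin n, (if (b : ℕ) = (a : ℕ) - 1 ∧ 1 ≤ (a : ℕ) then g ((a:ℕ)-1) * U b c else 0)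
            = (if (b : ℕ) = (a : ℕ) - 1 then g ((a:ℕ)-1) * U b c else 0) := by
          intro b; simp [ha]
        rw [Finset.sum_congr rfl fun b _ => this b, fin_sum_ite, dif_pos ha,
          dif_pos (by omega : (a : ℕ) - 1 < n)]
      · rw [dif_neg ha]
        refine Finset.sum_eq_zero fun b _ => if_neg ?_
        tauto
    · rw [fin_sum_ite, dif_pos a.isLt]
  · rw [fin_sum_ite]

/-- Diagonal entries of the matrix in the statement. -/
def fMf (N : ℕ) (ε x y : ℝ) : ℕ → ℝ := fun i =>
  y + ((i : ℝ) + 1) * x - ((i : ℝ) + 1) * (2 * ((N : ℝ) - ((i : ℝ) + 1)) + 1 + 2 * ε)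

def gMf (N : ℕ) (ε : ℝ) : ℕ → ℝ := fun i =>
  ((i : ℝ) + 1) * ((i : ℝ) + 2) * ((N : ℝ) - ((i : ℝ) + 1)) * ((N : ℝ) - ((i : ℝ) + 1) + 2 * ε)

def fPf (ε x y : ℝ) : ℕ → ℝ := fun i =>
  ((i : ℝ) + 1) * x + y - ((i : ℝ) + 1) * (((i : ℝ) + 1) + 2 * ε)

def gPf (N : ℕ) (x : ℝ) : ℕ → ℝ := fun i =>
  ((i : ℝ) + 1) * ((i : ℝ) + 2) * ((N : ℝ) - ((i : ℝ) + 1)) * x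

lemma uent_R2' (N a c : ℕ) :
    ((c : ℝ) - 1 - (a : ℝ)) * (if 1 ≤ c then uent N a (c - 1) else 0)
      = (c : ℝ) * ((c : ℝ) + 1) * ((N : ℝ) - (c : ℝ)) * uent N a c := by
  cases c with
  | zero => simp
  | succ c =>
      rw [if_pos (by omega)]
      simp only [Nat.add_sub_cancel]
      have h := uent_R2 N a c
      push_cast
      linear_combination -h

lemma uent_R1' (N a c : ℕ) :
    (a : ℝ) * ((a : ℝ) + 1) * ((N : ℝ) - (a : ℝ)) * (if 1 ≤ a then uent N (a - 1) c else 0)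
      = ((c : ℝ) - (a : ℝ)) * uent N a c := by
  cases a with
  | zero =>
      cases c with
      | zero => simp
      | succ c => simp [uent_of_lt N (Nat.succ_pos c)]
  | succ a =>
      rw [if_pos (by omega)]
      simp only [Nat.add_sub_cancel]
      have h := uent_R1 N a c
      push_cast
      linear_combination h

lemma E_scalar (N : ℕ) (ε x y : ℝ) (a c : ℕ) (ha : a < N) (hc : c < N) :
    (if 1 ≤ c then uent N a (c - 1) else 0) + uent N a c * fMf N ε x y c +
        uent N a (c + 1) * gMf N ε c
      = (if 1 ≤ a then gPf N x (a - 1) * uent N (a - 1) c else 0) +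
          fPf ε x y a * uent N a c + uent N (a + 1) c := by
  have e3 : (if 1 ≤ a then gPf N x (a - 1) * uent N (a - 1) c else 0)
      = (a : ℝ) * ((a : ℝ) + 1) * ((N : ℝ) - (a : ℝ)) * x *
          (if 1 ≤ a then uent N (a - 1) c else 0) := by
    cases a with
    | zero => simp
    | succ a =>
        rw [if_pos (by omega), if_pos (by omega)]
        simp only [Nat.add_sub_cancel, gPf]
        push_cast
        ring
  rw [e3]
  by_cases hca : c = a + 1
  · subst hca
    rw [if_pos (by omega)]
    simp only [Nat.add_sub_cancel]
    rw [uent_self, uent_of_lt N (by omega), uent_of_lt N (by omega), uent_self]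
    have h0 : (if 1 ≤ a then uent N (a - 1) (a + 1) else 0) = 0 := by
      split_ifs with h
      · exact uent_of_lt N (by omega)
      · rfl
    rw [h0]
    ring
  · have hne : ((c : ℝ) - 1 - (a : ℝ)) ≠ 0 := by
      intro h0
      apply hca
      have : (c : ℝ) = (a : ℝ) + 1 := by linarith
      exact_mod_cast this
    refine mul_left_cancel₀ hne ?_
    have h1 := uent_R2' N a c
    have h2 := uent_R2 N a c
    have h3 := uent_R1' N a c
    have h4 := uent_R1 N a c
    simp only [fMf, gMf, fPf]
    linear_combination h1 + ((c:ℝ) - 1 - (a:ℝ)) * ((N:ℝ) - (c:ℝ) - 1 + 2*ε) * h2 -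
      ((c:ℝ) - 1 - (a:ℝ)) * x * h3 + h4

/-- The intertwining matrix. -/
noncomputable def Umat (N : ℕ) : Matrix (Fin N) (Fin N) ℝ :=
  Matrix.of fun i j => uent N i j

lemma intertwine (N : ℕ) (ε x y : ℝ) :
    Umat N * triMat (fMf N ε x y) (gMf N ε) N
      = triMat (fPf ε x y) (gPf N x) N * Umat N := by
  ext a c
  rw [mul_triMat_apply, triMat_mul_apply]
  simp only [Umat, Matrix.of_apply]
  have e2 : (if h : (c : ℕ) + 1 < N then uent N a ((⟨(c:ℕ)+1, h⟩ : Fin N) : ℕ) * gMf N ε c else 0)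
      = uent N a ((c : ℕ) + 1) * gMf N ε c := by
    split_ifs with h
    · rfl
    · have hN : (N : ℝ) = (c : ℝ) + 1 := by
        have := c.isLt
        have : N = (c : ℕ) + 1 := by omega
        exact_mod_cast this
      simp only [gMf, hN]
      ring
  have e4 : (if h : (a : ℕ) + 1 < N then uent N ((⟨(a:ℕ)+1, h⟩ : Fin N) : ℕ) c else 0)
      = uent N ((a : ℕ) + 1) c := by
    split_ifs with h
    · rfl
    · have : N = (a : ℕ) + 1 := by have := a.isLt; omega
      rw [← this]
      exact (uent_top N c.isLt).symm
  have e1 : (if h : 1 ≤ (c : ℕ) then uent N a ((⟨(c:ℕ)-1, by omega⟩ : Fin N) : ℕ) else 0)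
      = (if 1 ≤ (c : ℕ) then uent N a ((c : ℕ) - 1) else 0) := by
    split_ifs <;> rfl
  have e3 : (if h : 1 ≤ (a : ℕ) then gPf N x ((a:ℕ)-1) * uent N ((⟨(a:ℕ)-1, by omega⟩ : Fin N) : ℕ) c else 0)
      = (if 1 ≤ (a : ℕ) then gPf N x ((a : ℕ) - 1) * uent N ((a : ℕ) - 1) c else 0) := by
    split_ifs <;> rfl
  rw [e1, e2, e3, e4]
  exact E_scalar N ε x y a c a.isLt c.isLt

lemma det_Umat (N : ℕ) : (Umat N).det = 1 := by
  rw [Matrix.det_of_lowerTriangular (Umat N)]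
  · exact Finset.prod_eq_one fun i _ => uent_self N i
  · intro i j hij
    have : i < j := hij
    exact uent_of_lt N this

lemma det_triM_eq_triP (N : ℕ) (ε x y : ℝ) :
    (triMat (fMf N ε x y) (gMf N ε) N).det = (triMat (fPf ε x y) (gPf N x) N).det := by
  have h := congrArg Matrix.det (intertwine N ε x y)
  rw [Matrix.det_mul, Matrix.det_mul, det_Umat, one_mul, mul_one] at h
  exact h


lemma cpoly_eq_dtri (N : ℕ) (ε x y : ℝ) :
    ∀ k, constraintPoly N ε x y k = dtri k (fPf ε x y) (gPf N x) := by
  intro k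
  induction k using Nat.twoStepInduction with
  | zero => simp [constraintPoly, dtri]
  | one =>
      simp only [constraintPoly, dtri, fPf]
      push_cast
      ring
  | more k ih1 ih2 =>
      rw [dtri_back, ← ih1, ← ih2]
      simp only [constraintPoly, fPf, gPf]
      push_cast
      ring

lemma stmt_matrix_eq (N : ℕ) (ε x y : ℝ) :
    y • (1 : Matrix (Fin N) (Fin N) ℝ) +
        x • Matrix.diagonal (fun i : Fin N => ((i : ℕ) + 1 : ℝ)) + Cmat N ε
      = triMat (fMf N ε x y) (gMf N ε) N := by
  ext i j
  simp only [Matrix.add_apply, Matrix.smul_apply, Matrix.one_apply, Matrix.diagonal_apply,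
    Cmat, Matrix.of_apply, triMat, smul_eq_mul, Fin.ext_iff, fMf, gMf]
  split_ifs <;> first | omega | (push_cast; ring)

/-- `P_N^{(N,ε)}(x,y) = det(y I_N + x D_N + C_N^{(N,ε)})` where
`D_N = diag(1,…,N)`. -/
theorem constraintPoly_eq_det (N : ℕ) (ε x y : ℝ) :
    constraintPoly N ε x y N =
      (y • (1 : Matrix (Fin N) (Fin N) ℝ) +
        x • Matrix.diagonal (fun i : Fin N => ((i : ℕ) + 1 : ℝ)) + Cmat N ε).det := by
  rw [stmt_matrix_eq, det_triM_eq_triP, det_triMat N (fPf ε x y) (gPf N x)]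
  exact cpoly_eq_dtri N ε x y N
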